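/- If Q is a finite dismantlable poset, then its barycentric subdivision S(Q) is dismantlable; consequently S^m(Q) is dismantlable for every m ≥ 0. -/

import Mathlib

/-- The barycentric subdivision of a poset: nonempty chains, ordered by inclusion. -/
def Sd (α : Type) [PartialOrder α] : Type :=
  {C : Set α // C.Nonempty ∧ IsChain (· ≤ ·) C}

instance {α : Type} [PartialOrder α] : PartialOrder (Sd α) :=
  inferInstanceAs (PartialOrder {C : Set α // C.Nonempty ∧ IsChain (· ≤ ·) C})

instance {α : Type} [PartialOrder α] [Finite α] : Finite (Sd α) :=
  inferInstanceAs (Finite {C : Set α // C.Nonempty ∧ IsChain (· ≤ ·) C})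

/-- `p` is dominated by `q` within the subposet `S`. -/
def DomIn {α : Type} [PartialOrder α] (S : Set α) (p q : α) : Prop :=
  p ∈ S ∧ q ∈ S ∧ p ≠ q ∧ (p ≤ q ∨ q ≤ p) ∧
    ∀ x ∈ S, x ≠ p → x ≠ q → (x < p → x < q) ∧ (p < x → q < x)

/-- `Reduces S T`: the subposet `S` can be reduced to the subposet `T` by successively
deleting dominated elements. -/
inductive Reduces {α : Type} [PartialOrder α] : Set α → Set α → Prop
  | refl (S : Set α) : Reduces S S
  | step {S T : Set α} (p q : α) (h : DomIn S p q) (hr : Reduces (S \ {p}) T) : Reduces S T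

/-- A poset is dismantlable if it reduces to a one-element subposet by successively
deleting dominated elements. -/
def Dismantlable (α : Type) [PartialOrder α] : Prop :=
  ∃ x : α, Reduces (Set.univ : Set α) {x}

/-- A bundled finite poset. -/
structure FinPoset where
  carrier : Type
  [po : PartialOrder carrier]
  [fin : Finite carrier]

attribute [instance] FinPoset.po FinPoset.fin

/-- Barycentric subdivision of a bundled finite poset. -/
def FinPoset.sd (P : FinPoset) : FinPoset :=
  { carrier := Sd P.carrier }

-- basics to test
namespace SdAux
variable {β : Type} [PartialOrder β]

lemma reduces_trans {S T U : Set β} (h1 : Reduces S T) (h2 : Reduces T U) : Reduces S U := by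
  induction h1 with
  | refl => exact h2
  | step p q h hr ih => exact Reduces.step p q h (ih h2)

lemma reduce_finset [DecidableEq β] (S : Set β) (A : Finset β)
    (h : ∀ B : Finset β, B ⊆ A → B.Nonempty →
      ∃ p ∈ B, ∃ q, DomIn (S \ ↑(A \ B)) p q) :
    Reduces S (S \ ↑A) := by
  have aux : ∀ B : Finset β, B ⊆ A → Reduces (S \ ↑(A \ B)) (S \ ↑A) := by
    intro B
    induction B using Finset.strongInduction with
    | _ B ih =>
      intro hBA
      rcases B.eq_empty_or_nonempty with rfl | hne
      · simp only [Finset.sdiff_empty]; exact Reduces.refl _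
      · obtain ⟨p, hpB, q, hdom⟩ := h B hBA hne
        have hpA : p ∈ A := hBA hpB
        have key : (S \ ↑(A \ B)) \ {p} = S \ ↑(A \ B.erase p) := by
          ext x
          simp only [Set.mem_diff, Finset.coe_sdiff, Finset.mem_coe, Set.mem_singleton_iff,
            Finset.mem_sdiff, Finset.mem_erase, Finset.mem_coe]
          constructor
          · rintro ⟨⟨hxS, hx⟩, hxp⟩
            refine ⟨hxS, ?_⟩
            rintro ⟨hxA, hx2⟩
            exact hx ⟨hxA, fun hxB => hx2 ⟨hxp, hxB⟩⟩
          · rintro ⟨hxS, hx⟩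
            have hxp : x ≠ p := by
              rintro rfl
              exact hx ⟨hpA, fun h2 => h2.1 rfl⟩
            exact ⟨⟨hxS, fun ⟨hxA, hxB⟩ => hx ⟨hxA, fun h2 => hxB h2.2⟩⟩, hxp⟩
        refine Reduces.step p q hdom ?_
        rw [key]
        exact ih (B.erase p) (Finset.erase_ssubset hpB) ((B.erase_subset p).trans hBA)
  have := aux A (le_refl A)
  simpa using this

end SdAux

namespace SdAux2
open SdAux
variable {α : Type} [PartialOrder α]

def chainsIn (S : Set α) : Set (Sd α) := {C | (C.1 : Set α) ⊆ S}

lemma sd_le_iff {C D : Sd α} : C ≤ D ↔ C.1 ⊆ D.1 := Iff.rfl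

lemma sd_lt_iff {C D : Sd α} : C < D ↔ C.1 ⊆ D.1 ∧ C.1 ≠ D.1 := by
  constructor
  · intro h
    exact ⟨h.le, fun he => h.ne (Subtype.ext he)⟩
  · rintro ⟨h1, h2⟩
    exact lt_of_le_of_ne h1 fun he => h2 (congrArg Subtype.val he)

lemma step_chains [Finite α] {S : Set α} {p q : α}
    (hdom : DomIn S p q) : Reduces (chainsIn S) (chainsIn (S \ {p})) := by
  classical
  haveI : Fintype (Sd α) := Fintype.ofFinite _
  obtain ⟨hpS, hqS, hpq, hpq2, hmov⟩ := hdom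
  -- every element of a chain through p is comparable with q
  have hqcomp : ∀ C : Sd α, C.1 ⊆ S → p ∈ C.1 → ∀ b ∈ C.1, q ≤ b ∨ b ≤ q := by
    intro C hCS hpC b hb
    by_cases hbq : b = q
    · subst hbq; exact Or.inl le_rfl
    by_cases hbp : b = p
    · subst hbp; exact hpq2.symm.imp id id
    have hbS : b ∈ S := hCS hb
    have hcomp : b ≤ p ∨ p ≤ b := C.2.2.total hb hpC |>.elim Or.inl Or.inr
    obtain ⟨h1, h2⟩ := hmov b hbS hbp hbq
    rcases hcomp with h | h
    · exact Or.inr (h1 (lt_of_le_of_ne h hbp)).le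
    · exact Or.inl (h2 (lt_of_le_of_ne h (Ne.symm hbp))).le
  set A₁ : Finset (Sd α) :=
    Finset.univ.filter (fun C : Sd α => C.1 ⊆ S ∧ p ∈ C.1 ∧ q ∉ C.1) with hA₁def
  set A₂ : Finset (Sd α) :=
    Finset.univ.filter (fun C : Sd α => C.1 ⊆ S ∧ p ∈ C.1 ∧ q ∈ C.1) with hA₂def
  have hA₁ : ∀ C : Sd α, C ∈ A₁ ↔ (C.1 ⊆ S ∧ p ∈ C.1 ∧ q ∉ C.1) := by
    intro C; simp [hA₁def]
  have hA₂ : ∀ C : Sd α, C ∈ A₂ ↔ (C.1 ⊆ S ∧ p ∈ C.1 ∧ q ∈ C.1) := by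
    intro C; simp [hA₂def]
  have phase1 : Reduces (chainsIn S) (chainsIn S \ ↑A₁) := by
    apply reduce_finset
    intro B hBA hBne
    obtain ⟨C, hCB, hCmax⟩ := B.exists_max_image (fun C => C.1.ncard) hBne
    obtain ⟨hCS, hpC, hqC⟩ := (hA₁ C).mp (hBA hCB)
    refine ⟨C, hCB, ?_⟩
    have hDchain : IsChain (· ≤ ·) (insert q C.1) :=
      C.2.2.insert (fun b hb _ => hqcomp C hCS hpC b hb)
    set D : Sd α := ⟨insert q C.1, ⟨q, Set.mem_insert q _⟩, hDchain⟩ with hDdef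
    refine ⟨D, ⟨⟨hCS, ?_⟩, ⟨?_, ?_⟩, ?_, Or.inl ?_, ?_⟩⟩
    · -- C not removed yet
      intro hC
      exact (Finset.mem_sdiff.mp hC).2 hCB
    · -- D ∈ chainsIn S
      exact Set.insert_subset hqS hCS
    · -- D ∉ A₁ \ B
      intro hD
      have := (hA₁ D).mp (Finset.mem_sdiff.mp hD).1
      exact this.2.2 (Set.mem_insert q _)
    · -- C ≠ D
      intro h
      exact hqC (h ▸ Set.mem_insert q _ : q ∈ C.1)
    · -- C ≤ D
      exact Set.subset_insert q C.1
    · rintro X ⟨hXS, hXrm⟩ hXC hXD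
      constructor
      · intro hlt
        exact lt_of_le_of_ne (le_trans hlt.le (Set.subset_insert q C.1 : C ≤ D)) hXD
      · intro hlt
        obtain ⟨hsub, hne⟩ := sd_lt_iff.mp hlt
        by_cases hqX : q ∈ X.1
        · refine sd_lt_iff.mpr ⟨Set.insert_subset hqX hsub, ?_⟩
          intro h
          exact hXD (Subtype.ext h.symm)
        · exfalso
          have hXA₁ : X ∈ A₁ := (hA₁ X).mpr ⟨hXS, hsub hpC, hqX⟩
          have hXB : X ∈ B := by
            by_contra hXB
            exact hXrm (Finset.mem_sdiff.mpr ⟨hXA₁, hXB⟩)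
          have h1 : C.1.ncard < X.1.ncard :=
            Set.ncard_lt_ncard (ssubset_of_subset_of_ne hsub hne) X.1.toFinite
          exact absurd (hCmax X hXB) (not_le.mpr h1)
  have phase2 : Reduces (chainsIn S \ ↑A₁) ((chainsIn S \ ↑A₁) \ ↑A₂) := by
    apply reduce_finset
    intro B hBA hBne
    obtain ⟨C, hCB, hCmin⟩ := B.exists_min_image (fun C => C.1.ncard) hBne
    obtain ⟨hCS, hpC, hqC⟩ := (hA₂ C).mp (hBA hCB)
    refine ⟨C, hCB, ?_⟩
    set D : Sd α := ⟨C.1 \ {p}, ⟨q, hqC, hpq.symm⟩, C.2.2.mono Set.diff_subset⟩ with hDdef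
    have hDA₁ : D ∉ A₁ := fun h => ((hA₁ D).mp h).2.1.2 rfl
    have hDA₂ : D ∉ A₂ := fun h => ((hA₂ D).mp h).2.1.2 rfl
    refine ⟨D, ⟨⟨⟨hCS, fun h => ((hA₁ C).mp h).2.2 hqC⟩, ?_⟩,
        ⟨⟨Set.diff_subset.trans hCS, fun h => hDA₁ h⟩, fun h => hDA₂ (Finset.mem_sdiff.mp h).1⟩,
        ?_, Or.inr Set.diff_subset, ?_⟩⟩
    · -- C not removed yet
      intro hC
      exact (Finset.mem_sdiff.mp hC).2 hCB
    · -- C ≠ D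
      intro h
      exact (h ▸ hpC : p ∈ D.1).2 rfl
    · rintro X ⟨⟨hXS, hXA₁⟩, hXrm⟩ hXC hXD
      constructor
      · intro hlt
        obtain ⟨hsub, hne⟩ := sd_lt_iff.mp hlt
        by_cases hpX : p ∈ X.1
        · exfalso
          have hqX : q ∈ X.1 := by
            by_contra hqX
            exact hXA₁ ((hA₁ X).mpr ⟨hXS, hpX, hqX⟩)
          have hXA₂ : X ∈ A₂ := (hA₂ X).mpr ⟨hXS, hpX, hqX⟩
          have hXB : X ∈ B := by
            by_contra hXB
            exact hXrm (Finset.mem_sdiff.mpr ⟨hXA₂, hXB⟩)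
          have h1 : X.1.ncard < C.1.ncard :=
            Set.ncard_lt_ncard (ssubset_of_subset_of_ne hsub hne) C.1.toFinite
          exact absurd (hCmin X hXB) (not_le.mpr h1)
        · refine sd_lt_iff.mpr ⟨fun x hx => ⟨hsub hx, fun hxp => hpX (hxp ▸ hx)⟩, ?_⟩
          intro h
          exact hXD (Subtype.ext h)
      · intro hlt
        obtain ⟨hsub, hne⟩ := sd_lt_iff.mp hlt
        refine sd_lt_iff.mpr ⟨(Set.diff_subset.trans hsub), ?_⟩
        intro h
        exact hXD (Subtype.ext h.symm)
  have hfinal : (chainsIn S \ ↑A₁) \ ↑A₂ = chainsIn (S \ {p}) := by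
    ext C
    simp only [Set.mem_diff, Finset.mem_coe, hA₁, hA₂, chainsIn, Set.mem_setOf_eq,
      Set.subset_diff, Set.disjoint_singleton_right]
    constructor
    · rintro ⟨⟨hCS, h1⟩, h2⟩
      refine ⟨hCS, fun hpC => ?_⟩
      by_cases hqC : q ∈ C.1
      · exact h2 ⟨hCS, hpC, hqC⟩
      · exact h1 ⟨hCS, hpC, hqC⟩
    · rintro ⟨hCS, hpC⟩
      exact ⟨⟨hCS, fun h => hpC h.2.1⟩, fun h => hpC h.2.1⟩
  exact reduces_trans phase1 (hfinal ▸ phase2)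

end SdAux2

namespace SdAux3
open SdAux SdAux2

lemma chains_reduces {α : Type} [PartialOrder α] [Finite α] {S T : Set α} (h : Reduces S T) :
    Reduces (chainsIn S) (chainsIn T) := by
  induction h with
  | refl => exact Reduces.refl _
  | step p q hd hr ih => exact reduces_trans (step_chains hd) ih

lemma sd_dismantlable {α : Type} [PartialOrder α] [Finite α] (h : Dismantlable α) :
    Dismantlable (Sd α) := by
  obtain ⟨x, hx⟩ := h
  have h2 := chains_reduces hx
  have e1 : chainsIn (Set.univ : Set α) = Set.univ := by
    ext C; simp [chainsIn]
  set x' : Sd α := ⟨{x}, Set.singleton_nonempty x,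
    Set.Subsingleton.isChain Set.subsingleton_singleton⟩ with hx'def
  have e2 : chainsIn ({x} : Set α) = {x'} := by
    ext C
    simp only [chainsIn, Set.mem_setOf_eq, Set.mem_singleton_iff]
    constructor
    · intro hsub
      exact Subtype.ext ((C.2.1.subset_singleton_iff).mp hsub)
    · rintro rfl
      exact subset_refl _
  rw [e1, e2] at h2
  exact ⟨x', h2⟩


end SdAux3

/-- If `Q` is a finite dismantlable poset, then `S(Q)` is dismantlable;
consequently `S^m(Q)` is dismantlable for every `m ≥ 0`. -/
theorem subdivision_dismantlable (Q : FinPoset) (hQ : Dismantlable Q.carrier) :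
    Dismantlable (Q.sd).carrier ∧ ∀ m : ℕ, Dismantlable ((FinPoset.sd^[m]) Q).carrier := by
  constructor
  · exact SdAux3.sd_dismantlable hQ
  · intro m
    induction m with
    | zero => exact hQ
    | succ n ih =>
      rw [Function.iterate_succ_apply']
      exact SdAux3.sd_dismantlable ih
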